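/- Let s ≥ e₁ - 2 where e₁ ≥ n is a constant, and consider the function w(x) = |x|^{-s} on ℝⁿ \ {0}. If A(x) = (a_{ij}(x)) is a symmetric positive-definite matrix field satisfying the ellipticity bound (∑ᵢ a_{ii}(x)) / (∑_{i,j} a_{ij}(x) ξᵢ ξⱼ) ≤ e₁ for all unit vectors ξ, then ℒw(x) = -∑_{i,j} a_{ij}(x) ∂ᵢ∂ⱼ w(x) ≤ 0 for all x ≠ 0. -/

import Mathlib

open Real

noncomputable def Lmap {n : ℕ} (x : EuclideanSpace ℝ (Fin n)) :
    EuclideanSpace ℝ (Fin n) →L[ℝ] ℝ :=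
  ∑ i, (2 * x i) • (EuclideanSpace.proj i : EuclideanSpace ℝ (Fin n) →L[ℝ] ℝ)

lemma hasFDerivAt_sumsq {n : ℕ} (x : EuclideanSpace ℝ (Fin n)) :
    HasFDerivAt (fun y : EuclideanSpace ℝ (Fin n) => ∑ i, y i * y i) (Lmap x) x := by
  have h : ∀ i : Fin n, HasFDerivAt (fun y : EuclideanSpace ℝ (Fin n) => y i * y i)
      ((2 * x i) • (EuclideanSpace.proj i : EuclideanSpace ℝ (Fin n) →L[ℝ] ℝ)) x := by
    intro i
    have hp : HasFDerivAt (fun y : EuclideanSpace ℝ (Fin n) => y i)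
        (EuclideanSpace.proj i : EuclideanSpace ℝ (Fin n) →L[ℝ] ℝ) x :=
      (EuclideanSpace.proj i : EuclideanSpace ℝ (Fin n) →L[ℝ] ℝ).hasFDerivAt
    have := hp.mul hp
    rw [two_mul, add_smul]
    exact this
  exact HasFDerivAt.fun_sum (fun i _ => h i)

lemma Lmap_apply {n : ℕ} (x : EuclideanSpace ℝ (Fin n)) (j : Fin n) :
    Lmap x (EuclideanSpace.single j (1 : ℝ)) = 2 * x j := by
  simp [Lmap, ContinuousLinearMap.sum_apply, EuclideanSpace.single_apply]

lemma sumsq_eq {n : ℕ} (y : EuclideanSpace ℝ (Fin n)) :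
    ∑ i, y i * y i = ‖y‖ ^ 2 := by
  rw [EuclideanSpace.norm_eq, Real.sq_sqrt (by positivity)]
  exact Finset.sum_congr rfl fun i _ => by rw [Real.norm_eq_abs, sq_abs, sq]

lemma sumsq_pos {n : ℕ} {y : EuclideanSpace ℝ (Fin n)} (hy : y ≠ 0) :
    0 < ∑ i, y i * y i := by
  rw [sumsq_eq]
  have : 0 < ‖y‖ := norm_pos_iff.mpr hy
  positivity

lemma w_eq {n : ℕ} {s : ℝ} (hs : 0 < s) (w : EuclideanSpace ℝ (Fin n) → ℝ)
    (hw : ∀ x, w x = ‖x‖ ^ (-s)) :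
    w = fun y => (∑ i, y i * y i) ^ (-s / 2 : ℝ) := by
  funext y
  rw [hw y, sumsq_eq]
  rw [← Real.rpow_natCast ‖y‖ 2, ← Real.rpow_mul (norm_nonneg y)]
  rw [show ((2:ℕ):ℝ) * (-s / 2) = -s by push_cast; ring]

lemma hasFDerivAt_w {n : ℕ} {s : ℝ} (w : EuclideanSpace ℝ (Fin n) → ℝ)
    (hw : ∀ x, w x = ‖x‖ ^ (-s)) (hs : 0 < s)
    {y : EuclideanSpace ℝ (Fin n)} (hy : y ≠ 0) :
    HasFDerivAt w ((-s / 2 * (∑ i, y i * y i) ^ (-s / 2 - 1)) • Lmap y) y := by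
  rw [w_eq hs w hw]
  exact (hasFDerivAt_sumsq y).rpow_const (Or.inl (sumsq_pos hy).ne')

lemma fderiv_w_apply {n : ℕ} {s : ℝ} (w : EuclideanSpace ℝ (Fin n) → ℝ)
    (hw : ∀ x, w x = ‖x‖ ^ (-s)) (hs : 0 < s)
    {y : EuclideanSpace ℝ (Fin n)} (hy : y ≠ 0) (j : Fin n) :
    fderiv ℝ w y (EuclideanSpace.single j (1 : ℝ))
      = (-s / 2 * (∑ i, y i * y i) ^ (-s / 2 - 1)) * (2 * y j) := by
  rw [(hasFDerivAt_w w hw hs hy).fderiv, ContinuousLinearMap.smul_apply, Lmap_apply,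
    smul_eq_mul]

lemma hess {n : ℕ} {s : ℝ} (w : EuclideanSpace ℝ (Fin n) → ℝ)
    (hw : ∀ x, w x = ‖x‖ ^ (-s)) (hs : 0 < s)
    {x : EuclideanSpace ℝ (Fin n)} (hx : x ≠ 0) (i j : Fin n) :
    fderiv ℝ (fun y => fderiv ℝ w y (EuclideanSpace.single j (1 : ℝ))) x
        (EuclideanSpace.single i (1 : ℝ))
      = (-s * (∑ k, x k * x k) ^ (-s / 2 - 1)) * (if j = i then 1 else 0)
        + (s * (s + 2) * (∑ k, x k * x k) ^ (-s / 2 - 2)) * (x i * x j) := by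
  set F : EuclideanSpace ℝ (Fin n) → ℝ := fun y => ∑ k, y k * y k with hF
  have hc : HasFDerivAt (fun y => -s / 2 * F y ^ (-s / 2 - 1 : ℝ))
      ((-s / 2) • (((-s / 2 - 1) * F x ^ (-s / 2 - 1 - 1 : ℝ)) • Lmap x)) x :=
    (((hasFDerivAt_sumsq x).rpow_const (Or.inl (sumsq_pos hx).ne'))).const_mul (-s / 2)
  have hd : HasFDerivAt (fun y : EuclideanSpace ℝ (Fin n) => 2 * y j)
      ((2 : ℝ) • (EuclideanSpace.proj j : EuclideanSpace ℝ (Fin n) →L[ℝ] ℝ)) x :=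
    (EuclideanSpace.proj j : EuclideanSpace ℝ (Fin n) →L[ℝ] ℝ).hasFDerivAt.const_mul 2
  have hφ := hc.mul hd
  have hmem : {y : EuclideanSpace ℝ (Fin n) | y ≠ 0} ∈ nhds x :=
    isOpen_compl_singleton.mem_nhds (by simpa using hx)
  have heq : (fun y => fderiv ℝ w y (EuclideanSpace.single j (1 : ℝ)))
      =ᶠ[nhds x] fun y => -s / 2 * F y ^ (-s / 2 - 1 : ℝ) * (2 * y j) :=
    Filter.eventuallyEq_of_mem hmem fun y hy => fderiv_w_apply w hw hs hy j
  rw [heq.fderiv_eq, HasFDerivAt.fderiv (f := fun y => -s / 2 * F y ^ (-s / 2 - 1 : ℝ) * (2 * y j)) hφ]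
  simp only [ContinuousLinearMap.add_apply, ContinuousLinearMap.smul_apply, Lmap_apply,
    smul_eq_mul, PiLp.proj_apply, EuclideanSpace.single_apply,
    show (-s / 2 - 1 - 1 : ℝ) = -s / 2 - 2 by ring, hF]
  by_cases h : j = i <;> simp [h] <;> ring

lemma Q_pos {n : ℕ} (A : Matrix (Fin n) (Fin n) ℝ) (hpos : A.PosDef)
    (x : EuclideanSpace ℝ (Fin n)) (hx : x ≠ 0) :
    0 < ∑ i, ∑ j, A i j * x i * x j := by
  have h := hpos.dotProduct_mulVec_pos (x := WithLp.ofLp x) (by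
    intro h0; apply hx; ext i; exact congrFun h0 i)
  rw [star_trivial] at h
  calc (0:ℝ) < dotProduct (WithLp.ofLp x) (A.mulVec (WithLp.ofLp x)) := h
    _ = ∑ i, ∑ j, A i j * x i * x j := by
        simp [dotProduct, Matrix.mulVec, Finset.mul_sum]
        exact Finset.sum_congr rfl fun i _ => Finset.sum_congr rfl fun j _ => by ring

lemma main_ineq (s e₁ F tr Q : ℝ) (hs0 : 0 < s) (hF : 0 < F) (hQ : 0 < Q)
    (he : e₁ ≤ s + 2) (hell' : tr / (F⁻¹ * Q) ≤ e₁) :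
    0 ≤ (-s * F ^ (-s / 2 - 1 : ℝ)) * tr + (s * (s + 2) * F ^ (-s / 2 - 2 : ℝ)) * Q := by
  have hQξpos : 0 < F⁻¹ * Q := mul_pos (inv_pos.mpr hF) hQ
  have htrle : tr ≤ e₁ * (F⁻¹ * Q) := (div_le_iff₀ hQξpos).mp hell'
  have hFtr : F * tr ≤ (s + 2) * Q := by
    have h1 : F * tr ≤ F * (e₁ * (F⁻¹ * Q)) :=
      mul_le_mul_of_nonneg_left htrle hF.le
    have h2 : F * (e₁ * (F⁻¹ * Q)) = e₁ * Q := by field_simp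
    rw [h2] at h1
    nlinarith
  have hsplit : F ^ (-s / 2 - 1 : ℝ) = F ^ (-s / 2 - 2 : ℝ) * F := by
    rw [← Real.rpow_add_one hF.ne' (-s / 2 - 2)]
    congr 1
    ring
  have hp : 0 < F ^ (-s / 2 - 2 : ℝ) := Real.rpow_pos_of_pos hF _
  have hexp : (-s * F ^ (-s / 2 - 1 : ℝ)) * tr + (s * (s + 2) * F ^ (-s / 2 - 2 : ℝ)) * Q
      = s * F ^ (-s / 2 - 2 : ℝ) * ((s + 2) * Q - F * tr) := by
    rw [hsplit]; ring
  rw [hexp]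
  exact mul_nonneg (mul_pos hs0 hp).le (sub_nonneg.mpr hFtr)

/-- For `s ≥ e₁ - 2` with `e₁ ≥ n`, the function `w x = ‖x‖^(-s)` is
sub-elliptic away from the origin for any uniformly elliptic symmetric coefficient
matrix field `A` with ellipticity function bounded by `e₁`:
`ℒw(x) = -∑ᵢⱼ aᵢⱼ(x) ∂ᵢ∂ⱼ w(x) ≤ 0` for `x ≠ 0`. -/
theorem stmt0 {n : ℕ} (hn : 3 ≤ n) (e₁ s : ℝ) (he₁ : (n : ℝ) ≤ e₁) (hs : e₁ - 2 ≤ s)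
    (A : EuclideanSpace ℝ (Fin n) → Matrix (Fin n) (Fin n) ℝ)
    (hsymm : ∀ x, (A x).IsSymm) (hpos : ∀ x, (A x).PosDef)
    (hell : ∀ (x : EuclideanSpace ℝ (Fin n)) (ξ : EuclideanSpace ℝ (Fin n)), ‖ξ‖ = 1 →
      (∑ i, A x i i) / (∑ i, ∑ j, A x i j * ξ i * ξ j) ≤ e₁)
    (w : EuclideanSpace ℝ (Fin n) → ℝ) (hw : ∀ x, w x = ‖x‖ ^ (-s)) :
    ∀ x : EuclideanSpace ℝ (Fin n), x ≠ 0 →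
      -(∑ i, ∑ j, A x i j *
        fderiv ℝ (fun y => fderiv ℝ w y (EuclideanSpace.single j (1 : ℝ))) x
          (EuclideanSpace.single i (1 : ℝ))) ≤ 0 := by
  intro x hx
  have h3 : (3 : ℝ) ≤ (n : ℝ) := by exact_mod_cast hn
  have hs0 : 0 < s := by linarith
  have hF : 0 < ∑ k, x k * x k := sumsq_pos hx
  have hQ : 0 < ∑ i, ∑ j, A x i j * x i * x j := Q_pos (A x) (hpos x) x hx
  -- the key identity for the sum
  have hinner : ∀ i, (∑ j, A x i j *
      fderiv ℝ (fun y => fderiv ℝ w y (EuclideanSpace.single j (1 : ℝ))) x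
        (EuclideanSpace.single i (1 : ℝ)))
      = (-s * (∑ k, x k * x k) ^ (-s / 2 - 1 : ℝ)) * A x i i
        + (s * (s + 2) * (∑ k, x k * x k) ^ (-s / 2 - 2 : ℝ)) * ∑ j, A x i j * x i * x j := by
    intro i
    rw [Finset.mul_sum,
      show (-s * (∑ k, x k * x k) ^ (-s / 2 - 1 : ℝ)) * A x i i
          = ∑ j, if j = i then A x i j * (-s * (∑ k, x k * x k) ^ (-s / 2 - 1 : ℝ)) else 0 by
        rw [Finset.sum_ite_eq' Finset.univ i
          (fun j => A x i j * (-s * (∑ k, x k * x k) ^ (-s / 2 - 1 : ℝ)))]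
        simp [mul_comm],
      ← Finset.sum_add_distrib]
    refine Finset.sum_congr rfl fun j _ => ?_
    rw [hess w hw hs0 hx i j]
    by_cases h : j = i <;> simp [h] <;> ring
  have key : (∑ i, ∑ j, A x i j *
      fderiv ℝ (fun y => fderiv ℝ w y (EuclideanSpace.single j (1 : ℝ))) x
        (EuclideanSpace.single i (1 : ℝ)))
      = (-s * (∑ k, x k * x k) ^ (-s / 2 - 1 : ℝ)) * (∑ i, A x i i)
        + (s * (s + 2) * (∑ k, x k * x k) ^ (-s / 2 - 2 : ℝ))
            * ∑ i, ∑ j, A x i j * x i * x j := by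
    simp only [hinner]
    rw [Finset.sum_add_distrib, ← Finset.mul_sum, ← Finset.mul_sum]
  -- ellipticity with the normalized direction
  have hxn : ‖x‖ ≠ 0 := norm_ne_zero_iff.mpr hx
  have hξnorm : ‖(‖x‖⁻¹ • x : EuclideanSpace ℝ (Fin n))‖ = 1 := by
    rw [norm_smul, norm_inv, norm_norm, inv_mul_cancel₀ hxn]
  have hell' := hell x (‖x‖⁻¹ • x) hξnorm
  have hQξ : (∑ i, ∑ j, A x i j * (‖x‖⁻¹ • x : EuclideanSpace ℝ (Fin n)) i
      * (‖x‖⁻¹ • x : EuclideanSpace ℝ (Fin n)) j)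
      = (∑ k, x k * x k)⁻¹ * ∑ i, ∑ j, A x i j * x i * x j := by
    rw [Finset.mul_sum]
    refine Finset.sum_congr rfl fun i _ => ?_
    rw [Finset.mul_sum]
    refine Finset.sum_congr rfl fun j _ => ?_
    have h1 : (‖x‖⁻¹ • x : EuclideanSpace ℝ (Fin n)) i = ‖x‖⁻¹ * x i := rfl
    have h2 : (‖x‖⁻¹ • x : EuclideanSpace ℝ (Fin n)) j = ‖x‖⁻¹ * x j := rfl
    rw [h1, h2, sumsq_eq, sq]
    field_simp
  rw [hQξ] at hell'
  rw [key, neg_nonpos]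
  exact main_ineq s e₁ _ _ _ hs0 hF hQ (by linarith) hell'
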